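/- arXiv:2106.10444 — 3 statements merged into one kernel-verified Lean document; each statement's English description precedes it below -/
import Mathlib

section
/- Let Z be a q×q positive definite Hermitian complex matrix with eigenvalues λ_1 ≥ λ_2 ≥ ... ≥ λ_q > 0, and let X be an arbitrary p×q complex matrix with p ≤ q. Then det(X X†) · ∏_{i=1}^{p} λ_i ≥ det(X Z X†) ≥ det(X X†) · ∏_{i=1}^{p} λ_{q-i+1}. -/
open Matrix ComplexOrder

section Aux

open Finset Equiv

variable {p q : ℕ}

instance decStrictMono (f : Fin p → Fin q) : Decidable (StrictMono f) :=
  decidable_of_iff (∀ a b : Fin p, a < b → f a < f b) Iff.rfl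

instance decInj (f : Fin p → Fin q) : Decidable (Function.Injective f) :=
  decidable_of_iff (∀ a b : Fin p, f a = f b → a = b) Iff.rfl

/-- The increasing rearrangement of an injective `f : Fin p → Fin q`
(junk value `f` itself if `f` is not injective). -/
noncomputable def sortFn (f : Fin p → Fin q) : Fin p → Fin q :=
  if h : (Finset.image f Finset.univ).card = p then
    (Finset.image f Finset.univ).orderEmbOfFin h else f

lemma card_image_of_inj {f : Fin p → Fin q} (hf : Function.Injective f) :
    (Finset.image f Finset.univ).card = p := by
  rw [Finset.card_image_of_injective _ hf, Finset.card_univ, Fintype.card_fin]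

lemma sortFn_strictMono {f : Fin p → Fin q} (hf : Function.Injective f) :
    StrictMono (sortFn f) := by
  rw [sortFn, dif_pos (card_image_of_inj hf)]
  exact (Finset.orderEmbOfFin _ _).strictMono

lemma image_sortFn {f : Fin p → Fin q} (hf : Function.Injective f) :
    Finset.image (sortFn f) Finset.univ = Finset.image f Finset.univ := by
  have h := card_image_of_inj hf
  rw [sortFn, dif_pos h]
  apply Finset.eq_of_subset_of_card_le
  · intro x hx
    rcases Finset.mem_image.1 hx with ⟨i, _, rfl⟩
    exact Finset.orderEmbOfFin_mem _ h i
  · rw [h, Finset.card_image_of_injective _ (Finset.orderEmbOfFin _ h).injective,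
      Finset.card_univ, Fintype.card_fin]

lemma sortFn_comp_perm {g : Fin p → Fin q} (hg : StrictMono g) (σ : Equiv.Perm (Fin p)) :
    sortFn (g ∘ σ) = g := by
  have him : Finset.image (g ∘ σ) Finset.univ = Finset.image g Finset.univ := by
    rw [← Finset.image_image, Finset.image_univ_equiv]
  have hcard : (Finset.image (g ∘ σ) Finset.univ).card = p := by
    rw [him]; exact card_image_of_inj hg.injective
  rw [sortFn, dif_pos hcard]
  refine (Finset.orderEmbOfFin_unique hcard (fun x => ?_) hg).symm
  rw [him]
  exact Finset.mem_image_of_mem g (Finset.mem_univ x)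

/-- The Cauchy–Binet formula for `p × q` times `q × p` complex matrices. -/
theorem det_mul_eq_sum_strictMono (hp : 0 < p) (M : Matrix (Fin p) (Fin q) ℂ)
    (N : Matrix (Fin q) (Fin p) ℂ) :
    (M * N).det = ∑ g ∈ Finset.univ.filter (fun g : Fin p → Fin q => StrictMono g),
      (M.submatrix id g).det * (N.submatrix g id).det := by
  haveI : Nonempty (Fin p) := ⟨⟨0, hp⟩⟩
  have step1 : (M * N).det
      = ∑ f : Fin p → Fin q, (∏ i, N (f i) i) * (M.submatrix id f).det := by
    calc (M * N).det
        = ∑ f : Fin p → Fin q, ∑ σ : Equiv.Perm (Fin p),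
            ((Equiv.Perm.sign σ : ℤ) : ℂ) * ∏ i, M (σ i) (f i) * N (f i) i := by
          simp only [det_apply', mul_apply, Finset.prod_univ_sum, Finset.mul_sum,
            Fintype.piFinset_univ]
          rw [Finset.sum_comm]
      _ = _ := by
          refine Finset.sum_congr rfl fun f _ => ?_
          simp only [det_apply', submatrix_apply, id_eq, Finset.mul_sum,
            Finset.prod_mul_distrib]
          refine Finset.sum_congr rfl fun σ _ => by ring
  have step2 : (M * N).det
      = ∑ f ∈ Finset.univ.filter (fun f : Fin p → Fin q => Function.Injective f),
          (∏ i, N (f i) i) * (M.submatrix id f).det := by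
    rw [step1]
    refine (Finset.sum_subset (Finset.filter_subset _ _) fun f _ hf => ?_).symm
    have hni : ¬ Function.Injective f := by
      simpa using (fun h => hf (Finset.mem_filter.2 ⟨Finset.mem_univ f, h⟩))
    rw [Function.Injective] at hni
    push_neg at hni
    obtain ⟨i, j, hfij, hij⟩ := hni
    have : (M.submatrix id f).det = 0 := by
      rw [← det_transpose]
      exact det_zero_of_row_eq hij (by ext k; simp [hfij])
    rw [this, mul_zero]
  rw [step2]
  rw [← Finset.sum_fiberwise_of_maps_to (g := sortFn)
    (t := Finset.univ.filter (fun g : Fin p → Fin q => StrictMono g))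
    (fun f hf => Finset.mem_filter.2 ⟨Finset.mem_univ _,
      sortFn_strictMono (Finset.mem_filter.1 hf).2⟩)]
  refine Finset.sum_congr rfl fun g hg => ?_
  have hgmono : StrictMono g := (Finset.mem_filter.1 hg).2
  -- the fiber over `g` is in bijection with permutations of `Fin p`
  have fiber_eq : ∑ f ∈ (Finset.univ.filter
        (fun f : Fin p → Fin q => Function.Injective f)).filter (fun f => sortFn f = g),
        (∏ i, N (f i) i) * (M.submatrix id f).det
      = ∑ σ : Equiv.Perm (Fin p),
        (∏ i, N (g (σ i)) i) * (M.submatrix id (g ∘ σ)).det := by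
    refine Finset.sum_bij' (i := fun f hf => ?_) (j := fun σ _ => g ∘ σ) ?_ ?_ ?_ ?_ ?_
    · -- construct the permutation from a fiber element
      have hf' := Finset.mem_filter.1 hf
      have hinj : Function.Injective f := (Finset.mem_filter.1 hf'.1).2
      have hsort : sortFn f = g := hf'.2
      have himg : Finset.image g Finset.univ = Finset.image f Finset.univ := by
        rw [← hsort]; exact image_sortFn hinj
      have key : ∀ i, g (Function.invFun g (f i)) = f i := by
        intro i
        refine Function.invFun_eq ?_
        have : f i ∈ Finset.image g Finset.univ := by
          rw [himg]; exact Finset.mem_image_of_mem f (Finset.mem_univ i)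
        rcases Finset.mem_image.1 this with ⟨j, _, hj⟩
        exact ⟨j, hj⟩
      refine Equiv.ofBijective (fun i => Function.invFun g (f i)) ?_
      rw [← Finite.injective_iff_bijective]
      intro a b hab
      have : g (Function.invFun g (f a)) = g (Function.invFun g (f b)) := by
        simp only at hab; rw [hab]
      rw [key, key] at this
      exact hinj this
    · intro a ha; exact Finset.mem_univ _
    · -- g ∘ σ is in the fiber
      intro σ _
      refine Finset.mem_filter.2 ⟨Finset.mem_filter.2 ⟨Finset.mem_univ _, ?_⟩,
        sortFn_comp_perm hgmono σ⟩
      exact hgmono.injective.comp σ.injective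
    · -- left inverse
      intro f hf
      have hf' := Finset.mem_filter.1 hf
      have hinj : Function.Injective f := (Finset.mem_filter.1 hf'.1).2
      have hsort : sortFn f = g := hf'.2
      have himg : Finset.image g Finset.univ = Finset.image f Finset.univ := by
        rw [← hsort]; exact image_sortFn hinj
      funext i
      simp only [Function.comp_apply, Equiv.ofBijective, Equiv.coe_fn_mk]
      refine Function.invFun_eq ?_
      have : f i ∈ Finset.image g Finset.univ := by
        rw [himg]; exact Finset.mem_image_of_mem f (Finset.mem_univ i)
      rcases Finset.mem_image.1 this with ⟨j, _, hj⟩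
      exact ⟨j, hj⟩
    · -- right inverse
      intro σ _
      ext i
      simp only [Equiv.ofBijective, Equiv.coe_fn_mk, Function.comp_apply]
      exact congrArg Fin.val (Function.leftInverse_invFun hgmono.injective (σ i))
    · -- values agree
      intro f hf
      have hf' := Finset.mem_filter.1 hf
      have hinj : Function.Injective f := (Finset.mem_filter.1 hf'.1).2
      have hsort : sortFn f = g := hf'.2
      have himg : Finset.image g Finset.univ = Finset.image f Finset.univ := by
        rw [← hsort]; exact image_sortFn hinj
      have hco : ∀ i, g (Function.invFun g (f i)) = f i := by
        intro i
        refine Function.invFun_eq ?_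
        have : f i ∈ Finset.image g Finset.univ := by
          rw [himg]; exact Finset.mem_image_of_mem f (Finset.mem_univ i)
        rcases Finset.mem_image.1 this with ⟨j, _, hj⟩
        exact ⟨j, hj⟩
      have e2 : (g ∘ fun i => Function.invFun g (f i)) = f := funext hco
      simp only [Equiv.ofBijective, Equiv.coe_fn_mk]
      rw [e2]
      congr 1
      refine Finset.prod_congr rfl fun i _ => ?_
      rw [hco i]
  rw [fiber_eq]
  -- now sum over permutations
  have : ∀ σ : Equiv.Perm (Fin p),
      (M.submatrix id (g ∘ σ)).det
        = ((Equiv.Perm.sign σ : ℤ) : ℂ) * (M.submatrix id g).det := by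
    intro σ
    have : M.submatrix id (g ∘ σ) = (M.submatrix id g).submatrix id σ := rfl
    rw [this, det_permute']
  calc ∑ σ : Equiv.Perm (Fin p), (∏ i, N (g (σ i)) i) * (M.submatrix id (g ∘ σ)).det
      = (∑ σ : Equiv.Perm (Fin p), ((Equiv.Perm.sign σ : ℤ) : ℂ)
          * ∏ i, (N.submatrix g id) (σ i) i) * (M.submatrix id g).det := by
        rw [Finset.sum_mul]
        refine Finset.sum_congr rfl fun σ _ => ?_
        rw [this σ]
        simp only [submatrix_apply, id_eq]
        ring
    _ = (M.submatrix id g).det * (N.submatrix g id).det := by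
        rw [← det_apply']; ring

lemma strictMono_val_le {f : Fin p → Fin q} (hf : StrictMono f) (i : Fin p) :
    (i : ℕ) ≤ (f i : ℕ) := by
  have H : ∀ n : ℕ, ∀ i : Fin p, (i : ℕ) = n → n ≤ (f i : ℕ) := by
    intro n
    induction n with
    | zero => intro i _; exact Nat.zero_le _
    | succ n ih =>
      intro i hi
      have hlt := i.isLt
      have hn : n < p := by omega
      have h1 := ih ⟨n, hn⟩ rfl
      have h2 : f ⟨n, hn⟩ < f i := hf (by simp [Fin.lt_def, hi])
      have h3 := Fin.lt_def.mp h2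
      omega
  exact H (i : ℕ) i rfl

lemma strictMono_val_ge {f : Fin p → Fin q} (hf : StrictMono f) (i : Fin p) :
    (f i : ℕ) ≤ q - 1 - (p - 1 - (i : ℕ)) := by
  have hp : 0 < p := i.pos
  have hq : 0 < q := (f i).pos
  set f' : Fin p → Fin q := fun j => (f j.rev).rev with hf'
  have hmono : StrictMono f' := by
    intro a b hab
    simp only [hf']
    rw [Fin.rev_lt_rev]
    exact hf (Fin.rev_lt_rev.2 hab)
  have h := strictMono_val_le hmono i.rev
  simp only [hf', Fin.rev_rev, Fin.val_rev] at h
  have h1 := i.isLt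
  have h2 := (f i).isLt
  omega

lemma prod_zeta_sandwich (hpq : p ≤ q) {ζ : Fin q → ℝ} (hdec : Antitone ζ)
    (hpos : ∀ j, 0 < ζ j) {h : Fin p → Fin q} (hinj : Function.Injective h) :
    (∏ i : Fin p, ζ ((Fin.castLE hpq i).rev)) ≤ (∏ i : Fin p, ζ (h i)) ∧
    (∏ i : Fin p, ζ (h i)) ≤ ∏ i : Fin p, ζ (Fin.castLE hpq i) := by
  set g := sortFn h with hg
  have hgmono : StrictMono g := sortFn_strictMono hinj
  have hprod : (∏ i : Fin p, ζ (h i)) = ∏ i : Fin p, ζ (g i) := by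
    have e1 : ∏ j ∈ Finset.image h Finset.univ, ζ j = ∏ i : Fin p, ζ (h i) :=
      Finset.prod_image (fun a _ b _ hab => hinj hab)
    have e2 : ∏ j ∈ Finset.image g Finset.univ, ζ j = ∏ i : Fin p, ζ (g i) :=
      Finset.prod_image (fun a _ b _ hab => hgmono.injective hab)
    rw [← e1, ← e2, hg, image_sortFn hinj]
  constructor
  · rw [hprod]
    have reindex : (∏ i : Fin p, ζ ((Fin.castLE hpq i).rev))
        = ∏ i : Fin p, ζ ((Fin.castLE hpq i.rev).rev) :=
      (Fintype.prod_equiv (Fin.revPerm) _ _ (fun i => rfl)).symm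
    rw [reindex]
    refine Finset.prod_le_prod (fun i _ => (hpos _).le) (fun i _ => ?_)
    refine hdec ?_
    rw [Fin.le_def]
    have h1 := strictMono_val_ge hgmono i
    have h2 := i.isLt
    simp only [Fin.val_rev, Fin.coe_castLE]
    omega
  · rw [hprod]
    refine Finset.prod_le_prod (fun i _ => (hpos _).le) (fun i _ => ?_)
    refine hdec ?_
    rw [Fin.le_def]
    have h1 := strictMono_val_le hgmono i
    simpa using h1

end Aux

/-- Lemma 6: eigenvalue sandwich for det(X Z Xᴴ). -/
theorem det_mul_posDef_mul_conjTranspose_sandwich {p q : ℕ} (hpq : p ≤ q)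
    (Z : Matrix (Fin q) (Fin q) ℂ) (hZ : Z.PosDef)
    (X : Matrix (Fin p) (Fin q) ℂ)
    (ζ : Fin q → ℝ) (hperm : ∃ σ : Equiv.Perm (Fin q), ζ = hZ.1.eigenvalues ∘ σ)
    (hdec : Antitone ζ) :
    ((X * Z * Xᴴ).det).re ≤ ((X * Xᴴ).det).re * ∏ i : Fin p, ζ (Fin.castLE hpq i) ∧
    ((X * Xᴴ).det).re * ∏ i : Fin p, ζ ((Fin.castLE hpq i).rev) ≤ ((X * Z * Xᴴ).det).re := by
  rcases Nat.eq_zero_or_pos p with rfl | hp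
  · have h1 : (X * Z * Xᴴ).det = 1 := Matrix.det_isEmpty
    have h2 : (X * Xᴴ).det = 1 := Matrix.det_isEmpty
    simp [h1, h2]
  obtain ⟨σ, hζ⟩ := hperm
  set eig : Fin q → ℝ := hZ.1.eigenvalues with heig
  have hpos : ∀ j, 0 < ζ j := fun j => by rw [hζ]; exact hZ.eigenvalues_pos _
  have heigpos : ∀ j, 0 < eig j := fun j => hZ.eigenvalues_pos _
  set U : Matrix (Fin q) (Fin q) ℂ := (hZ.1.eigenvectorUnitary : Matrix (Fin q) (Fin q) ℂ)
    with hU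
  set Y : Matrix (Fin p) (Fin q) ℂ := X * U with hYdef
  have hUU : U * star U = 1 := (Matrix.mem_unitaryGroup_iff).mp hZ.1.eigenvectorUnitary.2
  have hXX : X * Xᴴ = Y * Yᴴ := by
    rw [hYdef, conjTranspose_mul, ← Matrix.star_eq_conjTranspose U]
    rw [Matrix.mul_assoc, ← Matrix.mul_assoc U, hUU, Matrix.one_mul]
  have hXZ : X * Z * Xᴴ = Y * (Matrix.diagonal (RCLike.ofReal ∘ eig) : Matrix (Fin q) (Fin q) ℂ) * Yᴴ := by
    conv_lhs => rw [hZ.1.spectral_theorem]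
    rw [hYdef, conjTranspose_mul, ← Matrix.star_eq_conjTranspose U]
    simp only [Unitary.conjStarAlgAut_apply, Matrix.mul_assoc, heig]
    rfl
  set S := Finset.univ.filter (fun g : Fin p → Fin q => StrictMono g) with hS
  -- Cauchy–Binet for X Xᴴ
  have key2 : ((X * Xᴴ).det).re
      = ∑ g ∈ S, Complex.normSq (Y.submatrix id g).det := by
    rw [hXX, det_mul_eq_sum_strictMono hp]
    rw [Complex.re_sum]
    refine Finset.sum_congr rfl fun g hg => ?_
    rw [← conjTranspose_submatrix, det_conjTranspose, Complex.star_def, Complex.mul_conj]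
    simp
  -- Cauchy–Binet for X Z Xᴴ
  have key1 : ((X * Z * Xᴴ).det).re
      = ∑ g ∈ S, (∏ i, eig (g i)) * Complex.normSq (Y.submatrix id g).det := by
    rw [hXZ, Matrix.mul_assoc, ← Matrix.mul_assoc Y, det_mul_eq_sum_strictMono hp]
    rw [Complex.re_sum]
    refine Finset.sum_congr rfl fun g hg => ?_
    have hsub : (Y * (Matrix.diagonal (RCLike.ofReal ∘ eig) : Matrix (Fin q) (Fin q) ℂ)).submatrix id g
        = (Y.submatrix id g) * Matrix.diagonal (fun i => ((eig (g i) : ℝ) : ℂ)) := by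
      ext a b
      simp [Matrix.mul_diagonal, Matrix.submatrix_apply, Matrix.mul_apply,
        Matrix.diagonal_apply, Finset.mul_sum]
    rw [hsub, det_mul, det_diagonal]
    rw [← conjTranspose_submatrix, det_conjTranspose, Complex.star_def]
    have : (Y.submatrix id g).det * (∏ i, ((eig (g i) : ℝ) : ℂ))
        * ((starRingEnd ℂ) (Y.submatrix id g).det)
        = (∏ i, ((eig (g i) : ℝ) : ℂ)) * ((Complex.normSq (Y.submatrix id g).det : ℝ) : ℂ) := by
      rw [← Complex.mul_conj (Y.submatrix id g).det]; ring
    rw [this, ← Complex.ofReal_prod]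
    rw [← Complex.ofReal_mul, Complex.ofReal_re]
  -- sandwich bounds for each summand
  have hbound : ∀ g ∈ S,
      (∏ i : Fin p, ζ ((Fin.castLE hpq i).rev)) ≤ (∏ i, eig (g i)) ∧
      (∏ i, eig (g i)) ≤ ∏ i : Fin p, ζ (Fin.castLE hpq i) := by
    intro g hg
    have hgmono : StrictMono g := (Finset.mem_filter.1 hg).2
    have hinj : Function.Injective (σ.symm ∘ g) := σ.symm.injective.comp hgmono.injective
    have hprod : (∏ i, eig (g i)) = ∏ i, ζ ((σ.symm ∘ g) i) := by
      refine Finset.prod_congr rfl fun i _ => ?_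
      rw [hζ]
      simp
    rw [hprod]
    exact prod_zeta_sandwich hpq hdec hpos hinj
  constructor
  · rw [key1, key2, Finset.sum_mul]
    refine Finset.sum_le_sum fun g hg => ?_
    exact mul_le_mul_of_nonneg_right ((hbound g hg).2) (Complex.normSq_nonneg _)
      |>.trans_eq (mul_comm _ _)
  · rw [key1, key2, Finset.sum_mul]
    refine Finset.sum_le_sum fun g hg => ?_
    calc Complex.normSq (Y.submatrix id g).det * ∏ i : Fin p, ζ ((Fin.castLE hpq i).rev)
        = (∏ i : Fin p, ζ ((Fin.castLE hpq i).rev)) * Complex.normSq (Y.submatrix id g).det :=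
          mul_comm _ _
      _ ≤ (∏ i, eig (g i)) * Complex.normSq (Y.submatrix id g).det :=
          mul_le_mul_of_nonneg_right ((hbound g hg).1) (Complex.normSq_nonneg _)
end

section
/- Let G be a random N_r × N_t complex matrix (N_r ≥ N_t) such that G† G is almost surely positive definite, and suppose E[|log det(G† G)|] < ∞. Then E[log₂ det(I + ρ̄ G† G)] ≥ N_t · log₂(1 + ρ̄ · exp((1/N_t) · E[ln det(G† G)])) for every ρ̄ > 0. -/
open Matrix ComplexOrder MeasureTheory

lemma tangent_aux {t y : ℝ} (ht0 : 0 ≤ t) (ht1 : t ≤ 1) :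
    t * y ≤ Real.log ((1 - t) + t * Real.exp y) := by
  have h1 : Real.exp (t * y) ≤ (1 - t) + t * Real.exp y := by
    have h := Real.geom_mean_le_arith_mean2_weighted (by linarith : (0:ℝ) ≤ 1 - t) ht0
      zero_le_one (Real.exp_pos y).le (by ring)
    rw [Real.one_rpow, one_mul, mul_one] at h
    calc Real.exp (t * y) = Real.exp y ^ t := by rw [mul_comm, Real.exp_mul]
    _ ≤ _ := h
  calc t * y = Real.log (Real.exp (t * y)) := (Real.log_exp _).symm
  _ ≤ _ := Real.log_le_log (Real.exp_pos _) h1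

lemma tangent {ρ : ℝ} (hρ : 0 < ρ) (c u : ℝ) :
    Real.log (1 + ρ * Real.exp c) + ρ * Real.exp c / (1 + ρ * Real.exp c) * (u - c)
      ≤ Real.log (1 + ρ * Real.exp u) := by
  set a := ρ * Real.exp c with ha
  have ha0 : 0 < a := mul_pos hρ (Real.exp_pos c)
  have hA : (0:ℝ) < 1 + a := by linarith
  set t := a / (1 + a) with htdef
  have ht0 : 0 ≤ t := div_nonneg ha0.le hA.le
  have ht1 : t < 1 := by rw [div_lt_one hA]; linarith
  have h1 : (1 + a) * t = a := by rw [htdef]; field_simp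
  have h2 : a * Real.exp (u - c) = ρ * Real.exp u := by
    have hcu : c + (u - c) = u := by ring
    rw [ha, mul_assoc, ← Real.exp_add, hcu]
  have key : 1 + ρ * Real.exp u = (1 + a) * ((1 - t) + t * Real.exp (u - c)) := by
    calc 1 + ρ * Real.exp u = 1 + a * Real.exp (u - c) := by rw [h2]
    _ = (1 + a) - (1 + a) * t + ((1 + a) * t) * Real.exp (u - c) := by rw [h1]; ring
    _ = (1 + a) * ((1 - t) + t * Real.exp (u - c)) := by ring
  have hpos2 : 0 < (1 - t) + t * Real.exp (u - c) := by
    have := mul_nonneg ht0 (Real.exp_pos (u - c)).le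
    linarith
  rw [key, Real.log_mul hA.ne' hpos2.ne']
  have := tangent_aux ht0 ht1.le (y := u - c)
  linarith

lemma det_one_add_smul_eig {ι : Type*} [Fintype ι] [DecidableEq ι] {M : Matrix ι ι ℂ}
    (hM : M.IsHermitian) (ρ : ℝ) :
    (1 + (ρ:ℂ) • M).det = ∏ i, ((1 + ρ * hM.eigenvalues i : ℝ) : ℂ) := by
  set U := (hM.eigenvectorUnitary : Matrix ι ι ℂ) with hUdef
  have hU : U * star U = 1 := Matrix.mem_unitaryGroup_iff.mp hM.eigenvectorUnitary.2
  set D : Matrix ι ι ℂ := Matrix.diagonal (RCLike.ofReal ∘ hM.eigenvalues) with hDdef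
  have key : 1 + (ρ:ℂ) • M = U * (1 + (ρ:ℂ) • D) * star U := by
    conv_lhs => rw [hM.spectral_theorem, Unitary.conjStarAlgAut_apply]
    rw [mul_add, add_mul, mul_one, hU, mul_smul_comm, smul_mul_assoc]
  rw [key, det_mul_right_comm, hU, one_mul]
  have hdiag : (1 : Matrix ι ι ℂ) + (ρ:ℂ) • D
      = Matrix.diagonal (fun i => ((1 + ρ * hM.eigenvalues i : ℝ) : ℂ)) := by
    ext i j
    rcases eq_or_ne i j with rfl | hij
    · simp [hDdef, Matrix.one_apply_eq, Matrix.diagonal_apply_eq, Function.comp]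
    · simp [hDdef, Matrix.one_apply_ne hij, Matrix.diagonal_apply_ne _ hij]
  rw [hdiag, Matrix.det_diagonal]

lemma pointwise_bound {ι : Type*} [Fintype ι] [DecidableEq ι] {M : Matrix ι ι ℂ}
    (hM : M.PosDef) {ρ : ℝ} (hρ : 0 < ρ) (c : ℝ) :
    (Fintype.card ι : ℝ) * Real.log (1 + ρ * Real.exp c)
      + ρ * Real.exp c / (1 + ρ * Real.exp c) * (Real.log (M.det.re) - Fintype.card ι * c)
      ≤ Real.log (((1 + (ρ:ℂ) • M).det).re) := by
  set lam := hM.1.eigenvalues with hlam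
  have hlp : ∀ i, 0 < lam i := hM.eigenvalues_pos
  have hdet : M.det.re = ∏ i, lam i := by
    rw [hM.1.det_eq_prod_eigenvalues]
    norm_cast
  have hdet2 : ((1 + (ρ:ℂ) • M).det).re = ∏ i, (1 + ρ * lam i) := by
    rw [det_one_add_smul_eig hM.1 ρ]
    norm_cast
  have hlog1 : Real.log (M.det.re) = ∑ i, Real.log (lam i) := by
    rw [hdet, Real.log_prod fun i _ => (hlp i).ne']
  have hlog2 : Real.log (((1 + (ρ:ℂ) • M).det).re) = ∑ i, Real.log (1 + ρ * lam i) := by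
    have : ∀ i, (1 + ρ * lam i) ≠ 0 := fun i => by nlinarith [hlp i]
    rw [hdet2, Real.log_prod fun i _ => this i]
  set t := ρ * Real.exp c / (1 + ρ * Real.exp c) with ht
  have key : ∀ i, Real.log (1 + ρ * Real.exp c) + t * (Real.log (lam i) - c)
      ≤ Real.log (1 + ρ * lam i) := by
    intro i
    have h := tangent hρ c (Real.log (lam i))
    rwa [Real.exp_log (hlp i)] at h
  calc (Fintype.card ι : ℝ) * Real.log (1 + ρ * Real.exp c)
        + t * (Real.log (M.det.re) - Fintype.card ι * c)
      = ∑ i, (Real.log (1 + ρ * Real.exp c) + t * (Real.log (lam i) - c)) := by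
        rw [hlog1, Finset.sum_add_distrib, Finset.sum_const, Finset.card_univ, nsmul_eq_mul,
          ← Finset.mul_sum, Finset.sum_sub_distrib, Finset.sum_const, Finset.card_univ,
          nsmul_eq_mul]
    _ ≤ ∑ i, Real.log (1 + ρ * lam i) := Finset.sum_le_sum fun i _ => key i
    _ = _ := hlog2.symm

lemma ofReal_integral_le' {Ω : Type*} [MeasurableSpace Ω] {μ : Measure Ω} {g : Ω → ℝ}
    (hg : Integrable g μ) :
    ENNReal.ofReal (∫ ω, g ω ∂μ) ≤ ∫⁻ ω, ENNReal.ofReal (g ω) ∂μ := by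
  have h1 : ∫ ω, g ω ∂μ ≤ ∫ ω, max (g ω) 0 ∂μ :=
    integral_mono hg hg.pos_part (fun ω => le_max_left _ _)
  have h2 : ENNReal.ofReal (∫ ω, max (g ω) 0 ∂μ) = ∫⁻ ω, ENNReal.ofReal (max (g ω) 0) ∂μ :=
    ofReal_integral_eq_lintegral_ofReal hg.pos_part (ae_of_all _ fun ω => le_max_right _ _)
  calc ENNReal.ofReal (∫ ω, g ω ∂μ) ≤ ENNReal.ofReal (∫ ω, max (g ω) 0 ∂μ) :=
        ENNReal.ofReal_le_ofReal h1
    _ = ∫⁻ ω, ENNReal.ofReal (max (g ω) 0) ∂μ := h2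
    _ = ∫⁻ ω, ENNReal.ofReal (g ω) ∂μ := by
        refine lintegral_congr fun ω => ?_
        rcases le_total (g ω) 0 with h | h
        · rw [max_eq_right h, ENNReal.ofReal_zero, ENNReal.ofReal_eq_zero.mpr h]
        · rw [max_eq_left h]

/-- Capacity lower bound: E[log₂ det(I + ρ̄ GᴴG)] ≥ N_t log₂(1 + ρ̄ exp(E[ln det(GᴴG)]/N_t)). -/
theorem ergodic_capacity_lower_bound {Nr Nt : ℕ} (hle : Nt ≤ Nr)
    {Ω : Type*} [MeasurableSpace Ω] (μ : Measure Ω) [IsProbabilityMeasure μ]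
    (G : Ω → Matrix (Fin Nr) (Fin Nt) ℂ)
    (hpos : ∀ᵐ ω ∂μ, ((G ω)ᴴ * G ω).PosDef)
    (hint : Integrable (fun ω => Real.log ((((G ω)ᴴ * G ω).det).re)) μ)
    (ρ : ℝ) (hρ : 0 < ρ) :
    ENNReal.ofReal ((Nt : ℝ) * Real.logb 2
        (1 + ρ * Real.exp ((Nt : ℝ)⁻¹ * ∫ ω, Real.log ((((G ω)ᴴ * G ω).det).re) ∂μ)))
      ≤ ∫⁻ ω, ENNReal.ofReal (Real.logb 2 (((1 + (ρ : ℂ) • ((G ω)ᴴ * G ω)).det).re)) ∂μ := by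
  rcases Nat.eq_zero_or_pos Nt with h0 | hNt
  · subst h0; simp
  set L : Ω → ℝ := fun ω => Real.log ((((G ω)ᴴ * G ω).det).re) with hLdef
  set c : ℝ := (Nt : ℝ)⁻¹ * ∫ ω, L ω ∂μ with hcdef
  set t : ℝ := ρ * Real.exp c / (1 + ρ * Real.exp c) with htdef
  set g : Ω → ℝ := fun ω =>
    ((Nt:ℝ) * Real.log (1 + ρ * Real.exp c) + t * (L ω - Nt * c)) / Real.log 2 with hgdef
  have hNt' : (Nt:ℝ) ≠ 0 := Nat.cast_ne_zero.mpr hNt.ne'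
  have hint2 : Integrable (fun ω => (Nt:ℝ) * Real.log (1 + ρ * Real.exp c)
      + t * (L ω - Nt * c)) μ :=
    (integrable_const _).add ((hint.sub (integrable_const _)).const_mul t)
  have hgint : Integrable g μ := hint2.div_const _
  have hL : ∫ ω, L ω ∂μ = (Nt:ℝ) * c := by rw [hcdef]; field_simp
  have hintval : ∫ ω, g ω ∂μ = (Nt:ℝ) * Real.logb 2 (1 + ρ * Real.exp c) := by
    have heq : g = fun ω => ((Nt:ℝ) * Real.log (1 + ρ * Real.exp c) - t * ((Nt:ℝ) * c))
        / Real.log 2 + (t / Real.log 2) * L ω := by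
      funext ω; rw [hgdef]; ring
    rw [heq, integral_add (integrable_const _) (hint.const_mul _), integral_const,
      integral_const_mul, hL]
    simp only [measure_univ, probReal_univ, ENNReal.toReal_one, one_smul]
    rw [← Real.log_div_log]
    ring
  have hpt : ∀ᵐ ω ∂μ, g ω ≤ Real.logb 2 (((1 + (ρ:ℂ) • ((G ω)ᴴ * G ω)).det).re) := by
    filter_upwards [hpos] with ω hω
    have h := pointwise_bound hω hρ c
    rw [Fintype.card_fin, ← htdef] at h
    rw [hgdef]
    simp only
    rw [← Real.log_div_log]
    have hlog2 : (0:ℝ) < Real.log 2 := Real.log_pos (by norm_num)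
    exact div_le_div_of_nonneg_right h hlog2.le
  calc ENNReal.ofReal ((Nt:ℝ) * Real.logb 2 (1 + ρ * Real.exp c))
      = ENNReal.ofReal (∫ ω, g ω ∂μ) := by rw [hintval]
    _ ≤ ∫⁻ ω, ENNReal.ofReal (g ω) ∂μ := ofReal_integral_le' hgint
    _ ≤ _ := lintegral_mono_ae (hpt.mono fun ω h => ENNReal.ofReal_le_ofReal h)
end

section
/- Let Ψ ∈ ℂ^{N_t×N_t} be Hermitian positive definite with eigenvalues ζ_1 ≥ ... ≥ ζ_{N_t} > 0 and let G̃ ∈ ℂ^{N_r×N_t} with N_t > N_r. Then ln det(G̃ Ψ G̃†) ≤ ln det(G̃ G̃†) + Σ_{i=1}^{N_r} ln ζ_i, provided det(G̃ G̃†) > 0. -/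
open Matrix ComplexOrder

namespace LogDetAux

/-- Adding the rank-one perturbation only on rows in `S` (with row `j` replaced by `y`)
does not change the determinant. -/
lemma det_updateRow_aux {m : ℕ} (C : Matrix (Fin m) (Fin m) ℂ) (x y : Fin m → ℂ)
    (j : Fin m) (S : Finset (Fin m)) (hj : j ∉ S) (z : ℂ) :
    det (updateRow (C + z • vecMulVec (fun k => if k ∈ S then x k else 0) y) j y)
      = det (updateRow C j y) := by
  induction S using Finset.induction_on with
  | empty =>
    have h : C + z • vecMulVec (fun k => if k ∈ (∅ : Finset (Fin m)) then x k else 0) y = C := by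
      ext i l; simp [vecMulVec_apply]
    rw [h]
  | @insert k S hk ih =>
    have hjk : j ≠ k := fun h => hj (h ▸ Finset.mem_insert_self k S)
    have hjS : j ∉ S := fun h => hj (Finset.mem_insert_of_mem h)
    set A := updateRow (C + z • vecMulVec (fun l => if l ∈ S then x l else 0) y) j y with hA
    have key : updateRow (C + z • vecMulVec (fun l => if l ∈ insert k S then x l else 0) y) j y
        = updateRow A k (A k + (z * x k) • A j) := by
      ext i l
      by_cases hik : i = k
      · subst hik
        simp [hA, updateRow_apply, Ne.symm hjk, vecMulVec_apply, hk, Finset.mem_insert]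
        ring
      · by_cases hij : i = j
        · subst hij; simp [hA, updateRow_apply, hik]
        · simp [hA, updateRow_apply, hik, hij, vecMulVec_apply, Finset.mem_insert, hik]
    rw [key, det_updateRow_add_smul_self A (Ne.symm hjk), ih hjS]

/-- The determinant of a rank-one linear perturbation is an affine function of the parameter. -/
lemma exists_affine_det {m : ℕ} (C : Matrix (Fin m) (Fin m) ℂ) (x y : Fin m → ℂ) :
    ∃ a b : ℂ, ∀ z : ℂ, det (C + z • vecMulVec x y) = a + b * z := by
  suffices h : ∀ S : Finset (Fin m), ∃ a b : ℂ, ∀ z : ℂ,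
      det (C + z • vecMulVec (fun k => if k ∈ S then x k else 0) y) = a + b * z by
    obtain ⟨a, b, h⟩ := h Finset.univ
    refine ⟨a, b, fun z => ?_⟩
    have := h z
    simpa using this
  intro S
  induction S using Finset.induction_on with
  | empty =>
    refine ⟨det C, 0, fun z => ?_⟩
    have h : C + z • vecMulVec (fun k => if k ∈ (∅ : Finset (Fin m)) then x k else 0) y = C := by
      ext i l; simp [vecMulVec_apply]
    rw [h]; ring
  | @insert k S hk ih =>
    obtain ⟨a, b, ih⟩ := ih
    refine ⟨a, b + x k * det (updateRow C k y), fun z => ?_⟩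
    set M := C + z • vecMulVec (fun l => if l ∈ S then x l else 0) y with hM
    have key : C + z • vecMulVec (fun l => if l ∈ insert k S then x l else 0) y
        = updateRow M k (M k + (z * x k) • y) := by
      ext i l
      by_cases hik : i = k
      · subst hik
        simp [hM, updateRow_apply, vecMulVec_apply, hk]
        ring
      · simp [hM, updateRow_apply, hik, vecMulVec_apply, Finset.mem_insert]
    rw [key, det_updateRow_add, updateRow_eq_self, det_updateRow_smul,
      det_updateRow_aux C x y k S hk z, ih]
    ring

/-- F A d = re(det(A ⬝ diag d ⬝ Aᴴ)). -/
noncomputable def F {m n : ℕ} (A : Matrix (Fin m) (Fin n) ℂ) (d : Fin n → ℝ) : ℝ :=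
  (det (A * diagonal (fun i => (d i : ℂ)) * Aᴴ)).re

lemma F_nonneg {m n : ℕ} (A : Matrix (Fin m) (Fin n) ℂ) (d : Fin n → ℝ)
    (hd : ∀ i, 0 ≤ d i) : 0 ≤ F A d := by
  have hdiag : (diagonal (fun i => (d i : ℂ))).PosSemidef := by
    refine posSemidef_diagonal_iff.mpr fun i => ?_
    exact_mod_cast Complex.zero_le_real.mpr (hd i)
  have hPSD : (A * diagonal (fun i => (d i : ℂ)) * Aᴴ).PosSemidef := by
    simpa [Matrix.mul_assoc] using hdiag.mul_mul_conjTranspose_same A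
  rw [F, hPSD.1.det_eq_prod_eigenvalues, ← RCLike.ofReal_prod]
  have h := Finset.prod_nonneg (s := Finset.univ) fun i _ => hPSD.eigenvalues_nonneg i
  exact le_of_le_of_eq h (Complex.ofReal_re _).symm

lemma F_update_affine {m n : ℕ} (A : Matrix (Fin m) (Fin n) ℂ) (d : Fin n → ℝ) (i : Fin n) :
    ∃ a b : ℝ, ∀ t : ℝ, F A (Function.update d i t) = a + b * t := by
  obtain ⟨a, b, h⟩ := exists_affine_det
    (A * diagonal (fun j => ((Function.update d i 0 j : ℝ) : ℂ)) * Aᴴ)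
    (fun j => A j i) (fun k => Aᴴ i k)
  refine ⟨a.re, b.re, fun t => ?_⟩
  have hdiag : diagonal (fun j => ((Function.update d i t j : ℝ) : ℂ))
      = diagonal (fun j => ((Function.update d i 0 j : ℝ) : ℂ))
        + (t : ℂ) • diagonal (Pi.single i 1) := by
    ext j k
    rcases eq_or_ne j k with rfl | hjk
    · rcases eq_or_ne j i with rfl | hji
      · simp [Function.update_self, Pi.single_apply]
      · simp [Function.update_of_ne hji, Pi.single_apply, Ne.symm hji]
    · simp [diagonal_apply_ne _ hjk]
  have hE : A * diagonal (Pi.single i (1 : ℂ)) * Aᴴ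
      = vecMulVec (fun j => A j i) (fun k => Aᴴ i k) := by
    ext j k
    rw [Matrix.mul_assoc, mul_apply, vecMulVec_apply]
    simp only [diagonal_mul, Pi.single_apply]
    simp [ite_mul, Finset.sum_ite_eq' Finset.univ i]
  have key : A * diagonal (fun j => ((Function.update d i t j : ℝ) : ℂ)) * Aᴴ
      = A * diagonal (fun j => ((Function.update d i 0 j : ℝ) : ℂ)) * Aᴴ
        + (t : ℂ) • vecMulVec (fun j => A j i) (fun k => Aᴴ i k) := by
    rw [hdiag, Matrix.mul_add, Matrix.add_mul, Matrix.mul_smul, Matrix.smul_mul, hE]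
  rw [F, key, h t]
  simp [Complex.add_re, Complex.mul_re]

lemma F_step {m n : ℕ} (A : Matrix (Fin m) (Fin n) ℂ) (d : Fin n → ℝ)
    (hd : ∀ i, 0 ≤ d i) (c : ℝ) (hc : 0 < c) (i : Fin n) :
    F A d ≤ max (d i / c) 1 * F A (Function.update d i c) := by
  obtain ⟨a, b, hab⟩ := F_update_affine A d i
  have h0 : ∀ t : ℝ, 0 ≤ t → 0 ≤ a + b * t := by
    intro t ht
    rw [← hab t]
    refine F_nonneg _ _ fun j => ?_
    rcases eq_or_ne j i with rfl | hji
    · simpa using ht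
    · simpa [Function.update_of_ne hji] using hd j
  have ha : 0 ≤ a := by simpa using h0 0 le_rfl
  have hb : 0 ≤ b := by
    by_contra hb
    push_neg at hb
    have hbpos : 0 < -b := by linarith
    have h := h0 ((a + 1) / (-b)) (le_of_lt (div_pos (by linarith) hbpos))
    have he : b * ((a + 1) / (-b)) = -(a + 1) := by
      have hb0 : b ≠ 0 := by linarith
      rw [mul_div_assoc', div_neg, mul_div_cancel_left₀ _ hb0]
    rw [he] at h
    linarith
  have hFd : F A d = a + b * d i := by
    rw [← hab (d i), Function.update_eq_self]
  rw [hFd, hab c]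
  have hm1 : (1 : ℝ) ≤ max (d i / c) 1 := le_max_right _ _
  have hm2 : d i / c ≤ max (d i / c) 1 := le_max_left _ _
  have hdc : d i ≤ max (d i / c) 1 * c := by
    rw [div_le_iff₀ hc] at hm2; linarith
  nlinarith [mul_nonneg ha (sub_nonneg.mpr hm1), mul_nonneg hb (sub_nonneg.mpr hdc)]

lemma F_iter {m n : ℕ} (A : Matrix (Fin m) (Fin n) ℂ) (c : ℝ) (hc : 0 < c)
    (S : Finset (Fin n)) :
    ∀ d : Fin n → ℝ, (∀ i, 0 ≤ d i) →
      F A d ≤ (∏ i ∈ S, max (d i / c) 1) * F A (fun i => if i ∈ S then c else d i) := by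
  induction S using Finset.induction_on with
  | empty => intro d hd; simp
  | @insert j S hj ih =>
    intro d hd
    have step := ih d hd
    set d' : Fin n → ℝ := fun i => if i ∈ S then c else d i with hd'
    have hd'0 : ∀ i, 0 ≤ d' i := by
      intro i; by_cases h : i ∈ S <;> simp [hd', h, hc.le, hd i]
    have h2 := F_step A d' hd'0 c hc j
    have hdj : d' j = d j := by simp [hd', hj]
    have hupd : Function.update d' j c = fun i => if i ∈ insert j S then c else d i := by
      funext i
      rcases eq_or_ne i j with rfl | hij
      · simp
      · simp [Function.update_of_ne hij, hd', Finset.mem_insert, hij]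
    rw [hdj, hupd] at h2
    calc F A d ≤ (∏ i ∈ S, max (d i / c) 1) * F A d' := step
      _ ≤ (∏ i ∈ S, max (d i / c) 1)
            * (max (d j / c) 1 * F A (fun i => if i ∈ insert j S then c else d i)) := by
          refine mul_le_mul_of_nonneg_left h2 (Finset.prod_nonneg fun i _ => ?_)
          exact le_trans zero_le_one (le_max_right _ _)
      _ = _ := by rw [Finset.prod_insert hj]; ring

end LogDetAux

open LogDetAux

/-- ln det(G̃ΨG̃ᴴ) ≤ ln det(G̃G̃ᴴ) + Σ of the logs of the N_r largest eigenvalues of Ψ. -/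
theorem log_det_mul_posDef_mul_le {Nr Nt : ℕ} (hlt : Nt > Nr)
    (Ψ : Matrix (Fin Nt) (Fin Nt) ℂ) (hΨ : Ψ.PosDef)
    (ζ : Fin Nt → ℝ) (hperm : ∃ σ : Equiv.Perm (Fin Nt), ζ = hΨ.1.eigenvalues ∘ σ)
    (hdec : Antitone ζ)
    (Gt : Matrix (Fin Nr) (Fin Nt) ℂ) (hdet : 0 < ((Gt * Gtᴴ).det).re) :
    Real.log (((Gt * Ψ * Gtᴴ).det).re)
      ≤ Real.log (((Gt * Gtᴴ).det).re) + ∑ i : Fin Nr, Real.log (ζ (Fin.castLE hlt.le i)) := by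
  obtain ⟨σ, hζ⟩ := hperm
  set μ : Fin Nt → ℝ := hΨ.1.eigenvalues with hμ
  set U : Matrix (Fin Nt) (Fin Nt) ℂ := (hΨ.1.eigenvectorUnitary : Matrix (Fin Nt) (Fin Nt) ℂ)
    with hUdef
  have hU : U * Uᴴ = 1 := by
    have := (Matrix.mem_unitaryGroup_iff).mp (hΨ.1.eigenvectorUnitary).2
    simpa [star_eq_conjTranspose] using this
  set A : Matrix (Fin Nr) (Fin Nt) ℂ := Gt * U with hAdef
  have h1 : Gt * Ψ * Gtᴴ = A * diagonal (fun i => (μ i : ℂ)) * Aᴴ := by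
    conv_lhs => rw [hΨ.1.spectral_theorem, Unitary.conjStarAlgAut_apply]
    simp only [hAdef, star_eq_conjTranspose, conjTranspose_mul, Matrix.mul_assoc]
    rfl
  have h2 : Gt * Gtᴴ = A * Aᴴ := by
    simp only [hAdef, conjTranspose_mul, Matrix.mul_assoc]
    rw [← Matrix.mul_assoc U, hU, Matrix.one_mul]
  -- positivity of the left-hand determinant
  have hdetGG : IsUnit (Gt * Gtᴴ).det := by
    rw [isUnit_iff_ne_zero]
    intro h
    rw [h] at hdet
    simp at hdet
  have hinj : ∀ x : Fin Nr → ℂ, Gtᴴ *ᵥ x = 0 → x = 0 := by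
    intro x hx
    have hGG : Function.Injective ((Gt * Gtᴴ).mulVec) :=
      Matrix.mulVec_injective_iff_isUnit.mpr ((Matrix.isUnit_iff_isUnit_det _).mpr hdetGG)
    apply hGG
    rw [← Matrix.mulVec_mulVec, hx]
    simp
  have hPD : (Gt * Ψ * Gtᴴ).PosDef := by
    refine Matrix.PosDef.of_dotProduct_mulVec_pos (Matrix.isHermitian_mul_mul_conjTranspose Gt hΨ.1) fun x hx => ?_
    have hx' : Gtᴴ *ᵥ x ≠ 0 := fun h => hx (hinj x h)
    have := hΨ.dotProduct_mulVec_pos hx'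
    have heq : star x ⬝ᵥ (Gt * Ψ * Gtᴴ) *ᵥ x
        = star (Gtᴴ *ᵥ x) ⬝ᵥ Ψ *ᵥ (Gtᴴ *ᵥ x) := by
      rw [star_mulVec, ← Matrix.mulVec_mulVec, ← Matrix.mulVec_mulVec,
        dotProduct_mulVec, conjTranspose_conjTranspose]
    rw [heq]
    exact this
  have hLHSpos : 0 < ((Gt * Ψ * Gtᴴ).det).re := (Complex.lt_def.mp hPD.det_pos).1
  -- the index realizing the Nr-th largest eigenvalue
  have hNt0 : 0 < Nt := lt_of_le_of_lt (Nat.zero_le Nr) hlt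
  set j₀ : Fin Nt := ⟨Nr - 1, by omega⟩ with hj₀
  set c : ℝ := ζ j₀ with hcdef
  have hζpos : ∀ i, 0 < ζ i := by
    intro i; rw [hζ]; exact hΨ.eigenvalues_pos (σ i)
  have hc : 0 < c := hζpos j₀
  have hμ0 : ∀ i, 0 ≤ μ i := fun i => (hΨ.eigenvalues_pos i).le
  have main := F_iter A c hc Finset.univ μ hμ0
  have hconstfun : (fun i : Fin Nt => if i ∈ Finset.univ then c else μ i) = fun _ => c := by
    funext i; simp
  rw [hconstfun] at main
  -- evaluate F A (const c)
  have hdiagc : diagonal (fun _ : Fin Nt => (c : ℂ)) = (c : ℂ) • 1 := by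
    ext i j
    rcases eq_or_ne i j with rfl | hij
    · simp
    · simp [diagonal_apply_ne _ hij, Matrix.one_apply_ne hij]
  have hconst : F A (fun _ => c) = c ^ Nr * ((Gt * Gtᴴ).det).re := by
    rw [F, hdiagc, Matrix.mul_smul, Matrix.mul_one, Matrix.smul_mul, det_smul, ← h2]
    simp only [Fintype.card_fin]
    rw [← Complex.ofReal_pow, Complex.re_ofReal_mul]
  -- the product bound
  have hprodeq : (∏ i, max (μ i / c) 1) = ∏ i, max (ζ i / c) 1 := by
    rw [hζ]
    exact (Equiv.prod_comp σ fun i => max (μ i / c) 1).symm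
  have hmax : ∀ i : Fin Nt, max (ζ i / c) 1 = if (i : ℕ) < Nr then ζ i / c else 1 := by
    intro i
    by_cases h : (i : ℕ) < Nr
    · rw [if_pos h]
      refine max_eq_left ((one_le_div hc).mpr ?_)
      refine hdec ?_
      rw [Fin.le_def]
      simp only [hj₀]
      omega
    · rw [if_neg h]
      refine max_eq_right ((div_le_one hc).mpr ?_)
      refine hdec ?_
      rw [Fin.le_def]
      simp only [hj₀]
      omega
  have hprod : (∏ i, max (ζ i / c) 1)
      = (∏ i : Fin Nr, ζ (Fin.castLE hlt.le i)) / c ^ Nr := by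
    rw [Finset.prod_congr rfl fun i _ => hmax i, Finset.prod_ite, Finset.prod_const_one, mul_one]
    have hbij : ∏ i ∈ Finset.univ.filter (fun i : Fin Nt => (i : ℕ) < Nr), (ζ i / c)
        = ∏ i : Fin Nr, (ζ (Fin.castLE hlt.le i) / c) := by
      refine (Finset.prod_bij (fun (i : Fin Nr) _ => Fin.castLE hlt.le i) ?_ ?_ ?_ ?_).symm
      · intro i _; simp [Fin.castLE, i.isLt]
      · intro i _ j _ h; exact Fin.ext (by simpa [Fin.castLE] using h)
      · intro j hj
        simp only [Finset.mem_filter] at hj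
        exact ⟨⟨(j : ℕ), hj.2⟩, Finset.mem_univ _, Fin.ext rfl⟩
      · intro i _; rfl
    rw [hbij, Finset.prod_div_distrib, Finset.prod_const, Finset.card_univ, Fintype.card_fin]
  -- assemble
  have hchain : ((Gt * Ψ * Gtᴴ).det).re
      ≤ (∏ i : Fin Nr, ζ (Fin.castLE hlt.le i)) * ((Gt * Gtᴴ).det).re := by
    have hF1 : ((Gt * Ψ * Gtᴴ).det).re = F A μ := by rw [h1]; rfl
    rw [hF1]
    calc F A μ ≤ (∏ i, max (μ i / c) 1) * F A (fun _ => c) := main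
      _ = ((∏ i : Fin Nr, ζ (Fin.castLE hlt.le i)) / c ^ Nr)
            * (c ^ Nr * ((Gt * Gtᴴ).det).re) := by rw [hprodeq, hprod, hconst]
      _ = (∏ i : Fin Nr, ζ (Fin.castLE hlt.le i)) * ((Gt * Gtᴴ).det).re := by
          field_simp
  have hprodpos : 0 < ∏ i : Fin Nr, ζ (Fin.castLE hlt.le i) :=
    Finset.prod_pos fun i _ => hζpos _
  have hlog := Real.log_le_log hLHSpos hchain
  rw [Real.log_mul hprodpos.ne' hdet.ne', Real.log_prod fun i _ => (hζpos _).ne'] at hlog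
  linarith
end
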